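/- Let R be a *-ring, p, q projectors with p - q Moore-Penrose invertible, and H = (p-q)(p-q)†. Then qH = Hq. -/
import Mathlib

/-- `b` is a Moore-Penrose inverse of `a`. -/
def IsMP {R : Type*} [Ring R] [StarRing R] (a b : R) : Prop :=
  a * b * a = a ∧ b * a * b = b ∧ star (a * b) = a * b ∧ star (b * a) = b * a

/-- `p` is a projector: `p² = p = p*`. -/
def IsProjector {R : Type*} [Ring R] [StarRing R] (p : R) : Prop :=
  p * p = p ∧ star p = p

/-- `a` is *-cancellable. -/
def StarCancellable {R : Type*} [Ring R] [StarRing R] (a : R) : Prop :=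
  (∀ x : R, star a * a * x = 0 → a * x = 0) ∧ (∀ x : R, x * (a * star a) = 0 → x * a = 0)

/-- Moore-Penrose inverse is unique. -/
lemma mp_unique {R : Type*} [Ring R] [StarRing R] {a b c : R}
    (hb : IsMP a b) (hc : IsMP a c) : b = c := by
  obtain ⟨hb1, hb2, hb3, hb4⟩ := hb
  obtain ⟨hc1, hc2, hc3, hc4⟩ := hc
  have hab : a * b = a * c := by
    calc a * b = star (a * b) := hb3.symm
      _ = star ((a * c) * (a * b)) := by
          congr 1
          rw [mul_assoc a c (a * b), ← mul_assoc c a b, ← mul_assoc a (c * a) b,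
            ← mul_assoc a c a, hc1]
      _ = star (a * b) * star (a * c) := star_mul _ _
      _ = (a * b) * (a * c) := by rw [hb3, hc3]
      _ = a * c := by rw [← mul_assoc (a * b) a c, hb1]
  have hba : b * a = c * a := by
    calc b * a = star (b * a) := hb4.symm
      _ = star ((b * a) * (c * a)) := by
          congr 1
          rw [mul_assoc b a (c * a), ← mul_assoc a c a, hc1]
      _ = star (c * a) * star (b * a) := star_mul _ _
      _ = (c * a) * (b * a) := by rw [hb4, hc4]
      _ = c * a := by rw [mul_assoc c a (b * a), ← mul_assoc a b a, hb1]
  calc b = b * a * b := hb2.symm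
    _ = (c * a) * b := by rw [hba]
    _ = c * (a * b) := by rw [mul_assoc]
    _ = c * (a * c) := by rw [hab]
    _ = c * a * c := by rw [mul_assoc]
    _ = c := hc2

theorem stmt11 {R : Type*} [Ring R] [StarRing R] (p q d : R)
    (hp : IsProjector p) (hq : IsProjector q)
    (hd : IsMP (p - q) d) :
    q * ((p - q) * d) = ((p - q) * d) * q := by
  set a := p - q with ha
  have hsa : star a = a := by rw [ha, star_sub, hp.2, hq.2]
  obtain ⟨h1, h2, h3, h4⟩ := hd
  -- star d is also an MP inverse of a
  have hds : IsMP a (star d) := by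
    refine ⟨?_, ?_, ?_, ?_⟩
    · have := congrArg star h1
      rwa [star_mul, star_mul, hsa, ← mul_assoc] at this
    · have := congrArg star h2
      rwa [star_mul, star_mul, hsa, ← mul_assoc] at this
    · have h4' := h4
      rw [star_mul, hsa] at h4'
      rw [star_mul, star_star, hsa, h4']
    · have h3' := h3
      rw [star_mul, hsa] at h3'
      rw [star_mul, star_star, hsa, h3']
  have hdd : star d = d := mp_unique hds ⟨h1, h2, h3, h4⟩
  have hc : a * d = d * a := by
    have h4' := h4
    rwa [star_mul, hsa, hdd] at h4'
  -- q commutes with a * a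
  have hq2 : q * (a * a) = (a * a) * q := by
    have e1 : q * (a * a) = q - q * p * q := by
      calc q * (a * a) = q * (p * p) - q * p * q - (q * q) * p + (q * q) * q := by
            rw [ha]; noncomm_ring
        _ = q - q * p * q := by
            simp only [← mul_assoc, hp.1, hq.1]; noncomm_ring
    have e2 : (a * a) * q = q - q * p * q := by
      calc (a * a) * q = p * (p * q) - p * (q * q) - q * p * q + q * (q * q) := by
            rw [ha]; noncomm_ring
        _ = q - q * p * q := by
            simp only [← mul_assoc, hp.1, hq.1]; noncomm_ring
    rw [e1, e2]
  -- parametrized rewriting lemmas (left-associated)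
  have lc : ∀ x : R, x * a * d = x * d * a := by
    intro x; rw [mul_assoc x a d, hc, ← mul_assoc]
  have l1 : ∀ x : R, x * a * d * a = x * a := by
    intro x; rw [mul_assoc x a d, mul_assoc x (a * d) a, h1]
  have l2 : ∀ x : R, x * d * a * d = x * d := by
    intro x; rw [mul_assoc x d a, mul_assoc x (d * a) d, h2]
  have lq : ∀ x : R, x * q * a * a = x * a * a * q := by
    intro x
    rw [mul_assoc x q a, mul_assoc x (q * a) a, mul_assoc q a a, hq2,
      ← mul_assoc x (a * a) q, ← mul_assoc x a a]
  have hq2l : q * a * a = a * a * q := by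
    rw [mul_assoc q a a]; exact hq2
  have e2x : ∀ x : R, x * a * a * d * d = x * a * d := by
    intro x; rw [lc (x * a), l1 x]
  have e1h : (a * a : R) = a * d * a * a := by rw [h1]
  have e3h : (d * d * a * a : R) = a * d := by
    rw [← lc d, h2, ← hc]
  have eHr : ∀ x : R, x * a * a * a * d = x * a * a := by
    intro x; rw [lc (x * a * a), lc (x * a), l1 x]
  have key : q * a * d = a * d * q := by
    have left : q * a * d = a * d * q * a * d := by
      calc q * a * d = q * a * a * d * d := (e2x q).symm
        _ = a * a * q * d * d := by rw [hq2l]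
        _ = a * d * a * a * q * d * d := by rw [e1h]
        _ = a * d * q * a * a * d * d := by rw [← lq (a * d)]
        _ = a * d * q * a * d := e2x (a * d * q)
    have right : a * d * q = a * d * q * a * d := by
      calc a * d * q = d * d * a * a * q := by rw [e3h]
        _ = d * d * q * a * a := by rw [← lq (d * d)]
        _ = d * d * q * a * a * a * d := by rw [eHr (d * d * q)]
        _ = a * d * q * a * d := by rw [lq (d * d), e3h]
    exact left.trans right.symm
  rw [← mul_assoc]; exact key
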